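/- Let p be a prime and let V = F_{p^2}^4 be equipped with the standard nondegenerate Hermitian form ⟨x, y⟩ = Σ_i x_i y_i^p relative to the quadratic extension F_{p^2}/F_p. Then the number of isotropic lines in V, i.e., 1-dimensional F_{p^2}-subspaces U with U ⊆ U^⊥, equals (p^3+1)(p^2+1). -/

import Mathlib

open Finset Polynomial
open scoped Classical

variable {p : ℕ} [Fact p.Prime]
local notation "K" => GaloisField p 2
noncomputable instance : Fintype K := Fintype.ofFinite _

lemma hp2 : 2 ≤ p := (Fact.out : p.Prime).two_le

lemma cardK : Fintype.card K = p ^ 2 := by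
  have := GaloisField.card p 2 (by norm_num)
  rwa [Nat.card_eq_fintype_card] at this

lemma pow_card_K (x : K) : x ^ (p ^ 2) = x := by
  rw [← cardK]; exact FiniteField.pow_card x

lemma norm_fixed (x : K) : (x ^ (p + 1)) ^ p = x ^ (p + 1) := by
  rw [← pow_mul]
  have : (p+1) * p = p^2 + p := by ring
  rw [this, pow_add, pow_card_K, ← pow_succ']



noncomputable def FixS : Finset K :=
  univ.filter (fun c : K => c ^ p = c)

lemma mem_FixS {c : K} : c ∈ FixS (p:=p) ↔ c ^ p = c := by simp [FixS]

lemma natDegree_frobPoly : (X ^ p - X : K[X]).natDegree = p := by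
  have h2 := (Fact.out : p.Prime).two_le
  rw [natDegree_sub_eq_left_of_natDegree_lt] <;> simp <;> omega

lemma card_FixS : (FixS (p:=p)).card = p := by
  have h2 := (Fact.out : p.Prime).two_le
  have hne : (X ^ p - X : K[X]) ≠ 0 := by
    intro h
    have := natDegree_frobPoly (p := p)
    rw [h, natDegree_zero] at this; omega
  have hub : (FixS (p:=p)).card ≤ p := by
    have hsub : FixS (p:=p) ⊆ (X ^ p - X : K[X]).roots.toFinset := by
      intro c hc
      rw [Multiset.mem_toFinset, mem_roots hne]
      simp [IsRoot, (mem_FixS.1 hc), sub_eq_zero]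
    calc (FixS (p:=p)).card ≤ (X ^ p - X : K[X]).roots.toFinset.card := card_le_card hsub
      _ ≤ Multiset.card (X ^ p - X : K[X]).roots := Multiset.toFinset_card_le _
      _ ≤ (X ^ p - X : K[X]).natDegree := card_roots' _
      _ = p := natDegree_frobPoly
  have hlb : p ≤ (FixS (p:=p)).card := by
    have hinj : Function.Injective (algebraMap (ZMod p) K) := (algebraMap (ZMod p) K).injective
    have himg : (univ.image (algebraMap (ZMod p) K)) ⊆ FixS (p:=p) := by
      intro c hc
      rw [mem_image] at hc
      obtain ⟨a, -, rfl⟩ := hc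
      rw [mem_FixS, ← map_pow, ZMod.pow_card]
    calc p = Fintype.card (ZMod p) := (ZMod.card p).symm
      _ = (univ.image (algebraMap (ZMod p) K)).card := by rw [card_image_of_injective _ hinj, card_univ]
      _ ≤ (FixS (p:=p)).card := card_le_card himg
  omega


-- assume previous lemmas; test fiber machinery
noncomputable def Af : K → ℕ := fun c => (univ.filter fun x : K => x ^ (p+1) = c).card

lemma Af_zero : Af (p:=p) 0 = 1 := by
  rw [Af, Finset.card_eq_one]
  refine ⟨0, ?_⟩
  ext x
  simp [pow_eq_zero_iff]

lemma Af_le (c : K) : Af (p:=p) c ≤ p + 1 := by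
  have hsub : (univ.filter fun x : K => x ^ (p+1) = c) ⊆ (nthRoots (p+1) c).toFinset := by
    intro x hx
    rw [Multiset.mem_toFinset, mem_nthRoots (by omega)]
    exact (mem_filter.1 hx).2
  calc _ ≤ (nthRoots (p+1) c).toFinset.card := card_le_card hsub
    _ ≤ Multiset.card (nthRoots (p+1) c) := Multiset.toFinset_card_le _
    _ ≤ p + 1 := card_nthRoots _ _

lemma zero_mem_FixS : (0 : K) ∈ FixS (p:=p) := by
  rw [mem_FixS]; exact zero_pow (by have := hp2 (p:=p); omega)

lemma neg_mem_FixS {c : K} (h : c ∈ FixS (p:=p)) : -c ∈ FixS (p:=p) := by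
  rw [mem_FixS] at h ⊢
  rw [neg_pow, neg_one_pow_char, h, neg_one_mul]

lemma sub_mem_FixS {c d : K} (hc : c ∈ FixS (p:=p)) (hd : d ∈ FixS (p:=p)) :
    c - d ∈ FixS (p:=p) := by
  rw [mem_FixS] at hc hd ⊢
  rw [sub_pow_char, hc, hd]

lemma sum_Af : ∑ c ∈ FixS (p:=p), Af (p:=p) c = p ^ 2 := by
  rw [← cardK, ← card_univ]
  exact (card_eq_sum_card_fiberwise (fun x _ => (mem_FixS (p:=p)).2 (norm_fixed x))).symm

lemma card_FixS_erase : ((FixS (p:=p)).erase 0).card = p - 1 := by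
  rw [card_erase_of_mem zero_mem_FixS, card_FixS]

lemma Af_pos_val {c : K} (hc : c ∈ FixS (p:=p)) (h0 : c ≠ 0) : Af (p:=p) c = p + 1 := by
  have h2 := hp2 (p:=p)
  have hsum : ∑ x ∈ (FixS (p:=p)).erase 0, Af (p:=p) x + 1 = p ^ 2 := by
    rw [← Af_zero (p:=p), add_comm ]
    rw [Finset.add_sum_erase _ _ zero_mem_FixS]
    exact sum_Af
  by_contra hne
  have hlt : Af (p:=p) c < p + 1 := lt_of_le_of_ne (Af_le c) hne
  have hslt : ∑ x ∈ (FixS (p:=p)).erase 0, Af (p:=p) x <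
      ∑ _x ∈ (FixS (p:=p)).erase 0, (p + 1) :=
    Finset.sum_lt_sum (fun i _ => Af_le i) ⟨c, mem_erase.2 ⟨h0, hc⟩, hlt⟩
  rw [sum_const, smul_eq_mul, card_FixS_erase] at hslt
  have hq : (p - 1) * (p + 1) + 1 = p ^ 2 := by
    obtain ⟨m, rfl⟩ : ∃ m, p = m + 2 := ⟨p - 2, by omega⟩
    show (m + 1) * (m + 2 + 1) + 1 = (m + 2) ^ 2
    ring
  linarith

/-- generic fiber sum over FixS -/
lemma sum_fiber {α : Type} [Fintype α] (f : α → K) (hf : ∀ a, f a ∈ FixS (p:=p))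
    {β : Type} [AddCommMonoid β] (g : K → β) :
    ∑ a : α, g (f a) = ∑ c ∈ FixS (p:=p), (univ.filter fun a => f a = c).card • g c := by
  rw [← Finset.sum_fiberwise_of_maps_to (fun a _ => hf a) (fun a => g (f a))]
  refine sum_congr rfl fun c _ => ?_
  rw [Finset.sum_congr rfl (fun x hx => by rw [(mem_filter.1 hx).2]), sum_const]

noncomputable def S2 : K → ℕ :=
  fun c => (univ.filter fun x : K × K => x.1 ^ (p+1) + x.2 ^ (p+1) = c).card

lemma sum_norm_fiber (g : K → ℕ) :
    ∑ a : K, g (a ^ (p+1)) = ∑ c ∈ FixS (p:=p), Af (p:=p) c * g c := by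
  simpa [smul_eq_mul, Af] using
    sum_fiber (fun a : K => a ^ (p+1)) (fun a => (mem_FixS (p:=p)).2 (norm_fixed a)) g

lemma S2_eq (c : K) :
    S2 (p:=p) c = ∑ d ∈ FixS (p:=p), Af (p:=p) d * Af (p:=p) (c - d) := by
  rw [S2, card_filter, Fintype.sum_prod_type]
  rw [show (∑ a : K, ∑ b : K, ite (a ^ (p+1) + b ^ (p+1) = c) 1 0)
      = ∑ a : K, Af (p:=p) (c - a ^ (p+1)) from ?_]
  · exact sum_norm_fiber (fun d => Af (p:=p) (c - d))
  · refine sum_congr rfl fun a _ => ?_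
    rw [Af, card_filter]
    refine sum_congr rfl fun b _ => ?_
    congr 1
    rw [eq_iff_iff, eq_sub_iff_add_eq, add_comm]

lemma S2_zero : S2 (p:=p) 0 = 1 + (p - 1) * ((p + 1) * (p + 1)) := by
  rw [S2_eq, ← Finset.add_sum_erase _ _ (zero_mem_FixS (p:=p)), Af_zero, zero_sub, neg_zero,
    Af_zero]
  congr 1
  rw [Finset.sum_congr rfl (fun d hd => ?_), sum_const, card_FixS_erase, smul_eq_mul]
  have hd0 : d ≠ 0 := (mem_erase.1 hd).1
  have hdF : d ∈ FixS (p:=p) := (mem_erase.1 hd).2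
  rw [zero_sub, Af_pos_val hdF hd0, Af_pos_val (neg_mem_FixS hdF) (neg_ne_zero.2 hd0)]

lemma sum_erase_Af {c : K} (hc : c ∈ FixS (p:=p)) (h0 : c ≠ 0) :
    ∑ e ∈ (FixS (p:=p)).erase c, Af (p:=p) e + (p + 1) = p ^ 2 := by
  rw [← Af_pos_val hc h0, Finset.sum_erase_add _ _ hc]
  exact sum_Af

lemma S2_pos_val {c : K} (hc : c ∈ FixS (p:=p)) (h0 : c ≠ 0) :
    S2 (p:=p) c = (p + 1) * p * (p - 1) := by
  have h2 := hp2 (p:=p)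
  have key : S2 (p:=p) c = (p + 1) + (p + 1) * (∑ e ∈ (FixS (p:=p)).erase c, Af (p:=p) e) := by
    rw [S2_eq, ← Finset.add_sum_erase _ _ (zero_mem_FixS (p:=p)), Af_zero, sub_zero, one_mul,
      Af_pos_val hc h0]
    have h1 : ∑ d ∈ (FixS (p:=p)).erase 0, Af (p:=p) d * Af (p:=p) (c - d)
        = ∑ d ∈ (FixS (p:=p)).erase 0, (p + 1) * Af (p:=p) (c - d) :=
      Finset.sum_congr rfl fun d hd => by
        rw [Af_pos_val (mem_erase.1 hd).2 (mem_erase.1 hd).1]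
    rw [h1, ← mul_sum]
    have h2' : ∑ d ∈ (FixS (p:=p)).erase 0, Af (p:=p) (c - d)
        = ∑ e ∈ (FixS (p:=p)).erase c, Af (p:=p) e := by
      refine Finset.sum_nbij' (fun d => c - d) (fun e => c - e) ?_ ?_ ?_ ?_ ?_
      · intro d hd
        exact mem_erase.2 ⟨by
          intro h; exact (mem_erase.1 hd).1 (by rwa [sub_eq_self] at h),
          sub_mem_FixS hc (mem_erase.1 hd).2⟩
      · intro e he
        exact mem_erase.2 ⟨by
          intro h; exact (mem_erase.1 he).1 (by rw [sub_eq_zero] at h; exact h.symm),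
          sub_mem_FixS hc (mem_erase.1 he).2⟩
      · intro d _; ring
      · intro e _; ring
      · intro d _; rfl
    rw [h2']
  rw [key]
  have hsum := sum_erase_Af hc h0
  set s := ∑ e ∈ (FixS (p:=p)).erase c, Af (p:=p) e with hs
  obtain ⟨m, rfl⟩ : ∃ m, p = m + 1 := ⟨p - 1, by omega⟩
  have hm : m + 1 - 1 = m := by omega
  rw [hm]
  have hs1 : s + 1 = m * (m + 1) := by nlinarith [hsum]
  have h3 : m + 1 + 1 + (m + 1 + 1) * s = (m + 2) * (s + 1) := by ring
  rw [h3, hs1]; ring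

lemma add_mem_FixS {c d : K} (hc : c ∈ FixS (p:=p)) (hd : d ∈ FixS (p:=p)) :
    c + d ∈ FixS (p:=p) := by
  rw [mem_FixS] at hc hd ⊢
  rw [add_pow_char, hc, hd]

noncomputable def T4 : ℕ :=
  (univ.filter fun x : (K × K) × (K × K) =>
    (x.1.1 ^ (p+1) + x.1.2 ^ (p+1)) + (x.2.1 ^ (p+1) + x.2.2 ^ (p+1)) = 0).card

lemma sigma2_mem (y : K × K) : y.1 ^ (p+1) + y.2 ^ (p+1) ∈ FixS (p:=p) :=
  add_mem_FixS ((mem_FixS (p:=p)).2 (norm_fixed _)) ((mem_FixS (p:=p)).2 (norm_fixed _))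

lemma T4_eq : T4 (p:=p) = ∑ c ∈ FixS (p:=p), S2 (p:=p) c * S2 (p:=p) (0 - c) := by
  rw [T4, card_filter, Fintype.sum_prod_type]
  rw [show (∑ y : K × K, ∑ z : K × K,
        ite ((y.1 ^ (p+1) + y.2 ^ (p+1)) + (z.1 ^ (p+1) + z.2 ^ (p+1)) = 0) 1 0)
      = ∑ y : K × K, S2 (p:=p) (0 - (y.1 ^ (p+1) + y.2 ^ (p+1))) from ?_]
  · simpa [smul_eq_mul, S2] using
      sum_fiber (fun y : K × K => y.1 ^ (p+1) + y.2 ^ (p+1)) sigma2_mem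
        (fun c => S2 (p:=p) (0 - c))
  · refine sum_congr rfl fun y _ => ?_
    rw [S2, card_filter]
    refine sum_congr rfl fun z _ => ?_
    congr 1
    rw [eq_iff_iff, eq_sub_iff_add_eq, add_comm]

lemma T4_val : T4 (p:=p) + p ^ 3 = p ^ 7 + p ^ 4 := by
  have h2 := hp2 (p:=p)
  have key : T4 (p:=p) = S2 (p:=p) 0 * S2 (p:=p) 0
      + (p - 1) * ((p + 1) * p * (p - 1) * ((p + 1) * p * (p - 1))) := by
    rw [T4_eq, ← Finset.add_sum_erase _ _ (zero_mem_FixS (p:=p)), sub_zero]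
    congr 1
    rw [Finset.sum_congr rfl (fun c hc => ?_), sum_const, card_FixS_erase, smul_eq_mul]
    have hc0 : c ≠ 0 := (mem_erase.1 hc).1
    have hcF : c ∈ FixS (p:=p) := (mem_erase.1 hc).2
    rw [zero_sub, S2_pos_val hcF hc0, S2_pos_val (neg_mem_FixS hcF) (neg_ne_zero.2 hc0)]
  rw [key, S2_zero]
  obtain ⟨m, rfl⟩ : ∃ m, p = m + 1 := ⟨p - 1, by omega⟩
  have hm : m + 1 - 1 = m := by omega
  rw [hm]
  ring

section Vectors
open Submodule

local notation "V4" => (Fin 4 → K)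

noncomputable def sig : (Fin 4 → K) → K := fun v => ∑ i, v i * (v i) ^ p

lemma sig_eq (v : V4) : sig (p:=p) v = ∑ i, (v i) ^ (p + 1) := by
  refine sum_congr rfl fun i _ => ?_
  rw [pow_succ', ]

lemma card_sig_zero :
    (univ.filter fun v : V4 => sig (p:=p) v = 0).card = T4 (p:=p) := by
  rw [T4]
  refine (Finset.card_nbij' (fun v => ((v 0, v 1), (v 2, v 3)))
    (fun x => ![x.1.1, x.1.2, x.2.1, x.2.2]) ?_ ?_ ?_ ?_)
  · intro v hv
    rw [mem_coe, mem_filter] at hv ⊢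
    refine ⟨mem_univ _, ?_⟩
    have := hv.2
    rw [sig_eq, Fin.sum_univ_four] at this
    simp only [add_assoc] at this ⊢
    simpa using this
  · intro x hx
    rw [mem_coe, mem_filter] at hx ⊢
    refine ⟨mem_univ _, ?_⟩
    rw [sig_eq, Fin.sum_univ_four]
    have := hx.2
    simp only [add_assoc] at this ⊢
    simpa using this
  · intro v _
    funext i
    fin_cases i <;> simp
  · intro x _
    simp
end Vectors

section Lines
open Submodule

local notation "V4" => (Fin 4 → K)

lemma sig_zero : sig (p:=p) (0 : V4) = 0 := by
  simp [sig]

lemma card_nonzero_iso :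
    (univ.filter fun v : V4 => v ≠ 0 ∧ sig (p:=p) v = 0).card + 1 = T4 (p:=p) := by
  rw [← card_sig_zero]
  have h0 : (0 : V4) ∈ univ.filter fun v : V4 => sig (p:=p) v = 0 := by
    simp [sig_zero]
  have he : (univ.filter fun v : V4 => v ≠ 0 ∧ sig (p:=p) v = 0)
      = (univ.filter fun v : V4 => sig (p:=p) v = 0).erase 0 := by
    ext v; simp [and_comm, eq_comm, Finset.mem_erase]
  rw [he, card_erase_of_mem h0]
  have : 0 < (univ.filter fun v : V4 => sig (p:=p) v = 0).card := card_pos.2 ⟨0, h0⟩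
  omega

/-- the set of isotropic lines -/
def LSet : Set (Submodule K V4) :=
  {U | Module.finrank K U = 1 ∧ ∀ x ∈ U, ∀ y ∈ U, ∑ i, x i * (y i) ^ p = 0}

lemma LSet_finite : (LSet (p:=p)).Finite := by
  have : Finite (Submodule K V4) :=
    Finite.of_injective (fun U => (U : Set V4)) SetLike.coe_injective
  exact Set.toFinite _

lemma span_eq_of_mem {U : Submodule K V4} (hU : Module.finrank K U = 1)
    {v : V4} (hv : v ∈ U) (hv0 : v ≠ 0) : span K {v} = U := by
  have hle : span K {v} ≤ U := by
    rw [span_le, Set.singleton_subset_iff]; exact hv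
  refine Submodule.eq_of_le_of_finrank_le hle ?_
  rw [hU, finrank_span_singleton hv0]

lemma mem_LSet_span {v : V4} (hv0 : v ≠ 0) (hs : sig (p:=p) v = 0) :
    span K {v} ∈ LSet (p:=p) := by
  refine ⟨finrank_span_singleton hv0, ?_⟩
  intro x hx y hy
  rw [mem_span_singleton] at hx hy
  obtain ⟨a, rfl⟩ := hx
  obtain ⟨b, rfl⟩ := hy
  have : ∀ i, (a • v) i * ((b • v) i) ^ p = a * b ^ p * (v i * (v i) ^ p) := by
    intro i
    simp only [Pi.smul_apply, smul_eq_mul, mul_pow]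
    ring
  rw [Finset.sum_congr rfl fun i _ => this i, ← Finset.mul_sum]
  rw [show (∑ i, v i * (v i) ^ p) = sig (p:=p) v from rfl, hs, mul_zero]

lemma fiber_card {U : Submodule K V4} (hU : U ∈ LSet (p:=p)) :
    ((univ.filter fun v : V4 => v ≠ 0 ∧ sig (p:=p) v = 0).filter
      (fun v => span K {v} = U)).card + 1 = p ^ 2 := by
  have he : ((univ.filter fun v : V4 => v ≠ 0 ∧ sig (p:=p) v = 0).filter
      (fun v => span K {v} = U)) = (univ.filter fun v : V4 => v ∈ U).erase 0 := by
    ext v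
    simp only [Finset.mem_filter, Finset.mem_erase, mem_univ, true_and]
    constructor
    · rintro ⟨⟨hv0, -⟩, hsp⟩
      exact ⟨hv0, hsp ▸ mem_span_singleton_self v⟩
    · rintro ⟨hv0, hvU⟩
      have hsp := span_eq_of_mem hU.1 hvU hv0
      refine ⟨⟨hv0, ?_⟩, hsp⟩
      have := hU.2 v hvU v hvU
      exact this
  rw [he, card_erase_of_mem (by simp [Submodule.zero_mem])]
  have hcard : (univ.filter fun v : V4 => v ∈ U).card = p ^ 2 := by
    rw [← Fintype.card_subtype]
    have h5 : Fintype.card U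
        = Fintype.card (GaloisField p 2) ^ Module.finrank (GaloisField p 2) U :=
      Module.card_eq_pow_finrank
    rw [hU.1, pow_one, cardK] at h5
    exact h5
  have hpos : 0 < (univ.filter fun v : V4 => v ∈ U).card :=
    card_pos.2 ⟨0, by simp [Submodule.zero_mem]⟩
  omega

lemma main_count :
    (LSet (p:=p)).ncard * (p ^ 2 - 1) + 1 + p ^ 3 = p ^ 7 + p ^ 4 := by
  classical
  have h2 := hp2 (p:=p)
  have hfin := LSet_finite (p:=p)
  set W : Finset V4 := univ.filter fun v : V4 => v ≠ 0 ∧ sig (p:=p) v = 0 with hW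
  have hmaps : ∀ v ∈ W, span K {v} ∈ hfin.toFinset := by
    intro v hv
    rw [Set.Finite.mem_toFinset]
    rw [hW, mem_filter] at hv
    exact mem_LSet_span hv.2.1 hv.2.2
  have hfib := Finset.card_eq_sum_card_fiberwise hmaps
  have hsum : W.card + hfin.toFinset.card = hfin.toFinset.card * p ^ 2 := by
    have h1 : ∑ _U ∈ hfin.toFinset, (p ^ 2) = hfin.toFinset.card * p ^ 2 := by
      rw [sum_const, smul_eq_mul]
    have h2 : ∑ _U ∈ hfin.toFinset, (p ^ 2)
        = ∑ U ∈ hfin.toFinset,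
            (((univ.filter fun v : V4 => v ≠ 0 ∧ sig (p:=p) v = 0).filter
              (fun v => span K {v} = U)).card + 1) :=
      Finset.sum_congr rfl fun U hU =>
        (fiber_card (Set.Finite.mem_toFinset _ |>.1 hU)).symm
    have h3 : ∑ U ∈ hfin.toFinset,
            (((univ.filter fun v : V4 => v ≠ 0 ∧ sig (p:=p) v = 0).filter
              (fun v => span K {v} = U)).card + 1)
        = ∑ U ∈ hfin.toFinset,
            ((univ.filter fun v : V4 => v ≠ 0 ∧ sig (p:=p) v = 0).filter
              (fun v => span K {v} = U)).card + ∑ _U ∈ hfin.toFinset, 1 :=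
      Finset.sum_add_distrib
    have h4 : ∑ _U ∈ hfin.toFinset, 1 = hfin.toFinset.card := by simp
    rw [hW] at hfib
    linarith [hfib]
  have hw : W.card + 1 = T4 (p:=p) := card_nonzero_iso
  have ht := T4_val (p:=p)
  have hn : (LSet (p:=p)).ncard = hfin.toFinset.card :=
    Set.ncard_eq_toFinset_card _ hfin
  rw [hn]
  set n := hfin.toFinset.card
  have hm : p ^ 2 - 1 + 1 = p ^ 2 := by
    have : 1 ≤ p ^ 2 := Nat.one_le_pow _ _ (by omega)
    omega
  set m := p ^ 2 - 1 with hmdef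
  have h6 : n * p ^ 2 = n * m + n := by
    rw [← hm]; ring
  linarith
end Lines

/-- The number of isotropic lines in `𝔽_{p²}⁴` with the standard nondegenerate
Hermitian form `⟨x, y⟩ = ∑ i, x i * (y i)^p` is `(p³+1)(p²+1)`. -/
theorem stmt3 (p : ℕ) [Fact p.Prime] :
    {U : Submodule (GaloisField p 2) (Fin 4 → GaloisField p 2) |
        Module.finrank (GaloisField p 2) U = 1 ∧
        ∀ x ∈ U, ∀ y ∈ U, ∑ i, x i * (y i) ^ p = 0}.ncard
      = (p ^ 3 + 1) * (p ^ 2 + 1) := by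
  have h2 := hp2 (p:=p)
  have hmc := main_count (p:=p)
  show (LSet (p:=p)).ncard = (p ^ 3 + 1) * (p ^ 2 + 1)
  set n := (LSet (p:=p)).ncard with hn
  have h1 : 1 ≤ p ^ 2 := Nat.one_le_pow _ _ (by omega)
  have hz : (n : ℤ) * ((p:ℤ) ^ 2 - 1) = (p:ℤ)^7 + (p:ℤ)^4 - (p:ℤ)^3 - 1 := by
    have hc := congrArg (fun t : ℕ => (t : ℤ)) hmc
    simp only [Nat.cast_add, Nat.cast_mul, Nat.cast_pow, Nat.cast_one] at hc
    rw [Nat.cast_sub h1] at hc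
    push_cast at hc
    linarith
  have htz : (((p:ℤ)^3+1) * ((p:ℤ)^2+1)) * ((p:ℤ)^2-1)
      = (p:ℤ)^7 + (p:ℤ)^4 - (p:ℤ)^3 - 1 := by ring
  have hne : ((p:ℤ)^2 - 1) ≠ 0 := by
    have hh : (2:ℤ) ≤ (p:ℤ) := by exact_mod_cast h2
    nlinarith
  have hfin := mul_right_cancel₀ hne (hz.trans htz.symm)
  exact_mod_cast hfin
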